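/- arXiv:1412.1236 — 2 statements merged into one kernel-verified Lean document; each statement's English description precedes it below -/
import Mathlib

section
/- Let A be a real symmetric positive semidefinite n×n matrix with kernel spanned by the all-ones vector, let G⋆ = A†, and suppose all diagonal entries of G⋆ equal a common value C₀. Then for every u ∈ ℂⁿ with Σ_j u(j) = 0, (max_{0≤j≤n-1} |u(j)|)² ≤ C₀ · u* A u, and this constant is best possible: equality holds for u = G⋆ δ_{j₀} for each column index j₀. -/
open Matrix

def IsMoorePenrose {n : ℕ} (A G : Matrix (Fin n) (Fin n) ℝ) : Prop :=
  A * G * A = A ∧ G * A * G = G ∧ (A * G)ᵀ = A * G ∧ (G * A)ᵀ = G * A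

lemma aux_sym {n : ℕ} {A : Matrix (Fin n) (Fin n) ℝ} (hsymm : Aᵀ = A)
    (a b : Fin n → ℝ) : a ⬝ᵥ A *ᵥ b = b ⬝ᵥ A *ᵥ a := by
  calc a ⬝ᵥ A *ᵥ b = a ᵥ* A ⬝ᵥ b := dotProduct_mulVec a A b
    _ = (Aᵀ *ᵥ a) ⬝ᵥ b := by rw [mulVec_transpose]
    _ = (A *ᵥ a) ⬝ᵥ b := by rw [hsymm]
    _ = b ⬝ᵥ A *ᵥ a := dotProduct_comm _ _

lemma aux_cs {n : ℕ} {A : Matrix (Fin n) (Fin n) ℝ} (hsymm : Aᵀ = A) (hpsd : A.PosSemidef)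
    (v w : Fin n → ℝ) :
    (v ⬝ᵥ A *ᵥ w) ^ 2 ≤ (v ⬝ᵥ A *ᵥ v) * (w ⬝ᵥ A *ᵥ w) := by
  have key : ∀ t : ℝ, 0 ≤ (w ⬝ᵥ A *ᵥ w) * (t * t) + (2 * (v ⬝ᵥ A *ᵥ w)) * t + v ⬝ᵥ A *ᵥ v := by
    intro t
    have h0 := hpsd.dotProduct_mulVec_nonneg (v + t • w)
    simp only [star_trivial] at h0
    have hexp : (v + t • w) ⬝ᵥ A *ᵥ (v + t • w)
        = (w ⬝ᵥ A *ᵥ w) * (t * t) + (2 * (v ⬝ᵥ A *ᵥ w)) * t + v ⬝ᵥ A *ᵥ v := by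
      simp only [mulVec_add, mulVec_smul, add_dotProduct, dotProduct_add,
        smul_dotProduct, dotProduct_smul, smul_eq_mul, aux_sym hsymm w v]
      ring
    rw [hexp] at h0
    exact h0
  have := discrim_le_zero key
  rw [discrim] at this
  nlinarith [this]

lemma mp_unique {n : ℕ} {A G H : Matrix (Fin n) (Fin n) ℝ}
    (hG : IsMoorePenrose A G) (hH : IsMoorePenrose A H) : G = H := by
  obtain ⟨g1, g2, g3, g4⟩ := hG
  obtain ⟨h1, h2, h3, h4⟩ := hH
  have e1 : A * G = A * H := by
    calc A * G = (A * G)ᵀ := g3.symm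
      _ = ((A * H * A) * G)ᵀ := by rw [h1]
      _ = ((A * H) * (A * G))ᵀ := by rw [mul_assoc (A * H) A G]
      _ = (A * G)ᵀ * (A * H)ᵀ := transpose_mul _ _
      _ = (A * G) * (A * H) := by rw [g3, h3]
      _ = (A * G * A) * H := by rw [mul_assoc (A * G) A H]
      _ = A * H := by rw [g1]
  have e2 : G * A = H * A := by
    calc G * A = (G * A)ᵀ := g4.symm
      _ = (G * (A * H * A))ᵀ := by rw [h1]
      _ = ((G * A) * (H * A))ᵀ := by simp only [mul_assoc]
      _ = (H * A)ᵀ * (G * A)ᵀ := transpose_mul _ _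
      _ = (H * A) * (G * A) := by rw [g4, h4]
      _ = H * (A * G * A) := by rw [mul_assoc H A (G * A), mul_assoc A G A]
      _ = H * A := by rw [g1]
  calc G = G * A * G := g2.symm
    _ = H * A * G := by rw [e2]
    _ = H * (A * G) := mul_assoc _ _ _
    _ = H * (A * H) := by rw [e1]
    _ = H * A * H := (mul_assoc _ _ _).symm
    _ = H := h2

lemma mp_symm {n : ℕ} {A G : Matrix (Fin n) (Fin n) ℝ} (hsymm : Aᵀ = A)
    (hG : IsMoorePenrose A G) : Gᵀ = G := by
  obtain ⟨g1, g2, g3, g4⟩ := hG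
  have eAG : A * Gᵀ = G * A := by
    calc A * Gᵀ = Aᵀ * Gᵀ := by rw [hsymm]
      _ = (G * A)ᵀ := (transpose_mul G A).symm
      _ = G * A := g4
  have eGA : Gᵀ * A = A * G := by
    calc Gᵀ * A = Gᵀ * Aᵀ := by rw [hsymm]
      _ = (A * G)ᵀ := (transpose_mul A G).symm
      _ = A * G := g3
  have hGT : IsMoorePenrose A Gᵀ := by
    refine ⟨?_, ?_, ?_, ?_⟩
    · have e := congrArg Matrix.transpose g1
      rw [transpose_mul, transpose_mul, hsymm] at e
      rw [mul_assoc]; exact e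
    · have e := congrArg Matrix.transpose g2
      rw [transpose_mul, transpose_mul, hsymm] at e
      rw [mul_assoc]; exact e
    · rw [eAG]; exact g4
    · rw [eGA]; exact g3
  exact mp_unique hGT ⟨g1, g2, g3, g4⟩

theorem stmt3 {n : ℕ} (hn : 0 < n) (A G : Matrix (Fin n) (Fin n) ℝ)
    (hsymm : Aᵀ = A) (hpsd : A.PosSemidef)
    (hker : ∀ v : Fin n → ℝ, A.mulVec v = 0 ↔ ∃ c : ℝ, v = fun _ => c)
    (hG : IsMoorePenrose A G)
    (C₀ : ℝ) (hdiag : ∀ j, G j j = C₀) :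
    (∀ u : Fin n → ℂ, ∑ j, u j = 0 →
      (⨆ j, ‖u j‖) ^ 2 ≤
        C₀ * (star u ⬝ᵥ (A.map (Complex.ofReal)).mulVec u).re) ∧
    (∀ j₀ : Fin n,
      ((⨆ j, ‖(G.map (Complex.ofReal)).mulVec (Pi.single j₀ 1) j‖) ^ 2 =
        C₀ * (star ((G.map (Complex.ofReal)).mulVec (Pi.single j₀ 1)) ⬝ᵥ
          (A.map (Complex.ofReal)).mulVec
            ((G.map (Complex.ofReal)).mulVec (Pi.single j₀ 1))).re)) := by
  have hGsym : Gᵀ = G := mp_symm hsymm hG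
  obtain ⟨g1, g2, g3, g4⟩ := hG
  haveI : Nonempty (Fin n) := ⟨⟨0, hn⟩⟩
  have hA1 : A *ᵥ (fun _ => (1:ℝ)) = 0 := (hker _).mpr ⟨1, rfl⟩
  have hmove : ∀ (M : Matrix (Fin n) (Fin n) ℝ) (s w : Fin n → ℝ),
      (M *ᵥ s) ⬝ᵥ w = s ⬝ᵥ (Mᵀ *ᵥ w) := by
    intro M s w
    calc (M *ᵥ s) ⬝ᵥ w = w ⬝ᵥ (M *ᵥ s) := dotProduct_comm _ _
      _ = (w ᵥ* M) ⬝ᵥ s := dotProduct_mulVec _ _ _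
      _ = s ⬝ᵥ (w ᵥ* M) := dotProduct_comm _ _
      _ = s ⬝ᵥ (Mᵀ *ᵥ w) := by rw [mulVec_transpose]
  have hGA1 : (G * A) *ᵥ (fun _ => (1:ℝ)) = 0 := by
    rw [← mulVec_mulVec, hA1, mulVec_zero]
  have hproj : ∀ x : Fin n → ℝ, ∑ j, x j = 0 → (G * A) *ᵥ x = x := by
    intro x hx
    have hker0 : A *ᵥ ((G * A) *ᵥ x - x) = 0 := by
      rw [mulVec_sub, mulVec_mulVec, ← mul_assoc, g1, sub_self]
    obtain ⟨c, hc⟩ := (hker _).mp hker0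
    have hsumGA : ∑ j, ((G * A) *ᵥ x) j = 0 := by
      have h1 : ∑ j, ((G * A) *ᵥ x) j = (fun _ => (1:ℝ)) ⬝ᵥ ((G * A) *ᵥ x) := by
        simp [dotProduct]
      rw [h1, dotProduct_mulVec, ← g4, vecMul_transpose, hGA1, zero_dotProduct]
    have hc0 : c = 0 := by
      have h2 := congrArg (fun v : Fin n → ℝ => ∑ j, v j) hc
      simp only [Pi.sub_apply, Finset.sum_sub_distrib, hsumGA, hx, Finset.sum_const,
        Finset.card_univ, Fintype.card_fin, nsmul_eq_mul, sub_self] at h2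
      have hn' : (n : ℝ) ≠ 0 := by positivity
      rcases mul_eq_zero.mp h2.symm with h | h
      · exact absurd h hn'
      · exact h
    rw [hc0] at hc
    have hzero : (G * A) *ᵥ x - x = 0 := by rw [hc]; rfl
    exact sub_eq_zero.mp hzero
  have hrep : ∀ x : Fin n → ℝ, ∑ j, x j = 0 → ∀ j : Fin n,
      x j = (G *ᵥ Pi.single j 1) ⬝ᵥ (A *ᵥ x) := by
    intro x hx j
    rw [hmove, hGsym, mulVec_mulVec, hproj x hx, single_dotProduct, one_mul]
  have hquad : ∀ j : Fin n, (G *ᵥ Pi.single j 1) ⬝ᵥ (A *ᵥ (G *ᵥ Pi.single j 1)) = C₀ := by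
    intro j
    rw [hmove, hGsym, mulVec_mulVec, mulVec_mulVec, g2]
    simp [single_dotProduct, mulVec_single, hdiag j]
  have hC₀ : 0 ≤ C₀ := by
    have h := hpsd.dotProduct_mulVec_nonneg (G *ᵥ Pi.single (⟨0, hn⟩ : Fin n) 1)
    simp only [star_trivial] at h
    rw [← hquad ⟨0, hn⟩]
    exact h
  have hreal : ∀ x : Fin n → ℝ, ∑ j, x j = 0 → ∀ j : Fin n,
      (x j) ^ 2 ≤ C₀ * (x ⬝ᵥ A *ᵥ x) := by
    intro x hx j
    rw [hrep x hx j]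
    calc ((G *ᵥ Pi.single j 1) ⬝ᵥ (A *ᵥ x)) ^ 2
        ≤ ((G *ᵥ Pi.single j 1) ⬝ᵥ (A *ᵥ (G *ᵥ Pi.single j 1))) * (x ⬝ᵥ A *ᵥ x) :=
          aux_cs hsymm hpsd _ _
      _ = C₀ * (x ⬝ᵥ A *ᵥ x) := by rw [hquad j]
  have hre : ∀ u : Fin n → ℂ,
      (star u ⬝ᵥ (A.map Complex.ofReal) *ᵥ u).re
        = ((fun j => (u j).re) ⬝ᵥ A *ᵥ fun j => (u j).re)
          + ((fun j => (u j).im) ⬝ᵥ A *ᵥ fun j => (u j).im) := by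
    intro u
    simp only [dotProduct, mulVec, Matrix.map_apply, Pi.star_apply]
    rw [Complex.re_sum, ← Finset.sum_add_distrib]
    refine Finset.sum_congr rfl fun i _ => ?_
    rw [Finset.mul_sum, Complex.re_sum, Finset.mul_sum, Finset.mul_sum,
      ← Finset.sum_add_distrib]
    refine Finset.sum_congr rfl fun j _ => ?_
    simp only [Complex.mul_re, Complex.mul_im, Complex.ofReal_re, Complex.ofReal_im,
      Pi.star_apply, RCLike.star_def, Complex.conj_re, Complex.conj_im]
    ring
  have part1 : ∀ u : Fin n → ℂ, ∑ j, u j = 0 →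
      (⨆ j, ‖u j‖) ^ 2 ≤
        C₀ * (star u ⬝ᵥ (A.map Complex.ofReal) *ᵥ u).re := by
    intro u hu
    have hx : ∑ j, (u j).re = 0 := by rw [← Complex.re_sum, hu, Complex.zero_re]
    have hy : ∑ j, (u j).im = 0 := by rw [← Complex.im_sum, hu, Complex.zero_im]
    have hbound : ∀ j, ‖u j‖ ^ 2 ≤
        C₀ * (star u ⬝ᵥ (A.map Complex.ofReal) *ᵥ u).re := by
      intro j
      rw [Complex.sq_norm, Complex.normSq_apply, hre u, mul_add]
      have h1 : (u j).re ^ 2 ≤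
          C₀ * ((fun k => (u k).re) ⬝ᵥ A *ᵥ fun k => (u k).re) := hreal _ hx j
      have h2 : (u j).im ^ 2 ≤
          C₀ * ((fun k => (u k).im) ⬝ᵥ A *ᵥ fun k => (u k).im) := hreal _ hy j
      nlinarith [h1, h2]
    obtain ⟨jm, hjm⟩ := exists_eq_ciSup_of_finite (f := fun j => ‖u j‖)
    rw [← hjm]
    exact hbound jm
  refine ⟨part1, ?_⟩
  intro j₀
  have hu : (G.map Complex.ofReal) *ᵥ (Pi.single j₀ 1) =
      fun i => (((G *ᵥ Pi.single j₀ 1) i : ℝ) : ℂ) := by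
    funext i
    simp [mulVec_single, Matrix.map_apply]
  have hG1 : (fun _ => (1:ℝ)) ᵥ* G = 0 := by
    conv_lhs => rw [← g2]
    rw [← Matrix.vecMul_vecMul]
    have hGA1' : (fun _ => (1:ℝ)) ᵥ* (G * A) = 0 := by
      rw [← g4, vecMul_transpose, hGA1]
    rw [hGA1', zero_vecMul]
  have hxsum : ∑ j, (G *ᵥ Pi.single j₀ 1) j = 0 := by
    have h1 : ∑ j, (G *ᵥ Pi.single j₀ 1) j =
        (fun _ => (1:ℝ)) ⬝ᵥ (G *ᵥ Pi.single j₀ 1) := by simp [dotProduct]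
    rw [h1, dotProduct_mulVec, hG1, zero_dotProduct]
  have husum : ∑ j, ((G.map Complex.ofReal) *ᵥ (Pi.single j₀ 1)) j = 0 := by
    rw [hu, ← Complex.ofReal_sum, hxsum, Complex.ofReal_zero]
  have hreval : (star ((G.map Complex.ofReal) *ᵥ (Pi.single j₀ 1)) ⬝ᵥ
      (A.map Complex.ofReal) *ᵥ ((G.map Complex.ofReal) *ᵥ (Pi.single j₀ 1))).re = C₀ := by
    rw [hu, hre]
    simp only [Complex.ofReal_re, Complex.ofReal_im]
    have hz : ((fun j : Fin n => (0:ℝ)) ⬝ᵥ A *ᵥ fun j : Fin n => (0:ℝ)) = 0 := by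
      simp [dotProduct]
    rw [hz, add_zero]
    exact hquad j₀
  have habsle : ∀ j, ‖((G.map Complex.ofReal) *ᵥ (Pi.single j₀ 1)) j‖ ≤ C₀ := by
    intro j
    have h := hreal (G *ᵥ Pi.single j₀ 1) hxsum j
    rw [hquad j₀] at h
    simp only [hu, Complex.norm_real, Real.norm_eq_abs]
    nlinarith [abs_nonneg ((G *ᵥ Pi.single j₀ 1) j), sq_abs ((G *ᵥ Pi.single j₀ 1) j), hC₀, h]
  have hj0 : ‖((G.map Complex.ofReal) *ᵥ (Pi.single j₀ 1)) j₀‖ = C₀ := by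
    simp only [hu, Complex.norm_real, Real.norm_eq_abs]
    have hxx : (G *ᵥ Pi.single j₀ 1) j₀ = C₀ := by
      simp [mulVec_single, hdiag j₀]
    rw [hxx, abs_of_nonneg hC₀]
  have hsup : (⨆ j, ‖((G.map Complex.ofReal) *ᵥ (Pi.single j₀ 1)) j‖) = C₀ := by
    refine le_antisymm (ciSup_le habsle) ?_
    rw [← hj0]
    exact le_ciSup (f := fun j => ‖((G.map Complex.ofReal) *ᵥ (Pi.single j₀ 1)) j‖)
      (Set.Finite.bddAbove (Set.finite_range _)) j₀
  rw [show ((G.map (Complex.ofReal)).mulVec (Pi.single j₀ 1)) =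
    ((G.map Complex.ofReal) *ᵥ (Pi.single j₀ 1)) from rfl]
  rw [hsup, hreval]
  ring
end

section
/- Let A be an n×n positive semidefinite Hermitian matrix with kernel spanned by the all-ones vector, G⋆ = A†, and suppose all diagonal entries of G⋆ equal C₀. Then for each j, E(G⋆ δ_j) = (G⋆ δ_j)* A (G⋆ δ_j) = C₀, and max_{0≤i≤n-1} |(G⋆ δ_j)(i)| = C₀; hence equality is attained in the Sobolev inequality (max_i |u(i)|)² ≤ C₀ E(u) by u = G⋆ δ_j. -/
open Matrix
open scoped ComplexOrder

/-- The four Penrose conditions for a complex matrix. -/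
def IsMoorePenroseC {n : ℕ} (A G : Matrix (Fin n) (Fin n) ℂ) : Prop :=
  A * G * A = A ∧ G * A * G = G ∧ (A * G)ᴴ = A * G ∧ (G * A)ᴴ = G * A

lemma mp_unique_s17 {n : ℕ} (A B C : Matrix (Fin n) (Fin n) ℂ)
    (hB : IsMoorePenroseC A B) (hC : IsMoorePenroseC A C) : B = C := by
  obtain ⟨b1, b2, b3, b4⟩ := hB
  obtain ⟨c1, c2, c3, c4⟩ := hC
  have hAB : A * B = A * C := by
    calc A * B = (A * B)ᴴ := b3.symm
      _ = Bᴴ * Aᴴ := conjTranspose_mul _ _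
      _ = Bᴴ * (A * C * A)ᴴ := by rw [c1]
      _ = Bᴴ * (Aᴴ * (Cᴴ * Aᴴ)) := by
          simp [conjTranspose_mul, mul_assoc]
      _ = (Bᴴ * Aᴴ) * (Cᴴ * Aᴴ) := by simp [mul_assoc]
      _ = (A * B)ᴴ * (A * C)ᴴ := by rw [conjTranspose_mul, conjTranspose_mul]
      _ = (A * B) * (A * C) := by rw [b3, c3]
      _ = (A * B * A) * C := by rw [mul_assoc, mul_assoc, mul_assoc]
      _ = A * C := by rw [b1]
  have hBA : B * A = C * A := by
    calc B * A = (B * A)ᴴ := b4.symm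
      _ = Aᴴ * Bᴴ := conjTranspose_mul _ _
      _ = (A * C * A)ᴴ * Bᴴ := by rw [c1]
      _ = (Aᴴ * Cᴴ) * (Aᴴ * Bᴴ) := by
          simp [conjTranspose_mul, mul_assoc]
      _ = (C * A)ᴴ * (B * A)ᴴ := by rw [conjTranspose_mul, conjTranspose_mul]
      _ = (C * A) * (B * A) := by rw [b4, c4]
      _ = C * (A * B * A) := by simp [mul_assoc]
      _ = C * A := by rw [b1]
  calc B = B * A * B := b2.symm
    _ = C * A * B := by rw [hBA]
    _ = C * (A * C) := by rw [mul_assoc, hAB]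
    _ = C := by rw [← mul_assoc, c2]

theorem stmt17 {n : ℕ} (hn : 0 < n) (A G : Matrix (Fin n) (Fin n) ℂ)
    (hherm : A.IsHermitian) (hpsd : A.PosSemidef)
    (hker : ∀ v : Fin n → ℂ, A.mulVec v = 0 ↔ ∃ c : ℂ, v = fun _ => c)
    (hG : IsMoorePenroseC A G)
    (C₀ : ℝ) (hC₀ : 0 < C₀) (hdiag : ∀ j, G j j = (C₀ : ℂ)) :
    ∀ j : Fin n,
      star (G.mulVec (Pi.single j 1)) ⬝ᵥ A.mulVec (G.mulVec (Pi.single j 1)) = (C₀ : ℂ) ∧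
      (⨆ i, ‖G.mulVec (Pi.single j 1) i‖) = C₀ ∧
      (⨆ i, ‖G.mulVec (Pi.single j 1) i‖) ^ 2 =
        C₀ * (star (G.mulVec (Pi.single j 1)) ⬝ᵥ A.mulVec (G.mulVec (Pi.single j 1))).re := by
  haveI : Nonempty (Fin n) := ⟨⟨0, hn⟩⟩
  obtain ⟨g1, g2, g3, g4⟩ := hG
  have hA : Aᴴ = A := hherm
  -- G is Hermitian
  have hGH : Gᴴ = G := by
    apply mp_unique_s17 A Gᴴ G _ ⟨g1, g2, g3, g4⟩
    refine ⟨?_, ?_, ?_, ?_⟩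
    · calc A * Gᴴ * A = Aᴴ * Gᴴ * Aᴴ := by rw [hA]
        _ = (A * (G * A))ᴴ := by rw [conjTranspose_mul, conjTranspose_mul, mul_assoc]
        _ = A := by rw [← mul_assoc, g1, hA]
    · calc Gᴴ * A * Gᴴ = Gᴴ * Aᴴ * Gᴴ := by rw [hA]
        _ = (G * (A * G))ᴴ := by rw [conjTranspose_mul, conjTranspose_mul, mul_assoc]
        _ = Gᴴ := by rw [← mul_assoc, g2]
    · calc (A * Gᴴ)ᴴ = G * Aᴴ := by rw [conjTranspose_mul, conjTranspose_conjTranspose]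
        _ = G * A := by rw [hA]
        _ = (G * A)ᴴ := g4.symm
        _ = Aᴴ * Gᴴ := conjTranspose_mul _ _
        _ = A * Gᴴ := by rw [hA]
    · calc (Gᴴ * A)ᴴ = Aᴴ * G := by rw [conjTranspose_mul, conjTranspose_conjTranspose]
        _ = A * G := by rw [hA]
        _ = (A * G)ᴴ := g3.symm
        _ = Gᴴ * Aᴴ := conjTranspose_mul _ _
        _ = Gᴴ * A := by rw [hA]
  -- G is positive semidefinite
  have hGpsd : G.PosSemidef := by
    have := hpsd.mul_mul_conjTranspose_same G
    rwa [hGH, g2] at this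
  -- entry bound
  have hbound : ∀ i j : Fin n, ‖G i j‖ ≤ C₀ := by
    intro i j
    rcases eq_or_ne i j with rfl | hij
    · rw [hdiag i, Complex.norm_real, Real.norm_of_nonneg hC₀.le]
    · set v : Fin n → ℂ := Pi.single i (-(G i j)) + Pi.single j (C₀ : ℂ) with hv
      have hle := hGpsd.dotProduct_mulVec_nonneg v
      have hGji : G j i = starRingEnd ℂ (G i j) := by
        have := congrFun (congrFun hGH j) i
        simpa [conjTranspose_apply] using this.symm
      have hval : star v ⬝ᵥ G *ᵥ v
          = ((C₀ * (C₀^2 - Complex.normSq (G i j)) : ℝ) : ℂ) := by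
        have hsv : star v = Pi.single i (starRingEnd ℂ (-(G i j))) + Pi.single j ((C₀ : ℂ)) := by
          funext k
          rcases eq_or_ne k i with rfl | hk
          · simp [hv, Pi.single_eq_same, Pi.single_eq_of_ne hij]
          · rcases eq_or_ne k j with rfl | hk2
            · simp [hv, Pi.single_eq_same, Pi.single_eq_of_ne hij.symm,
                Complex.conj_ofReal]
            · simp [hv, Pi.single_eq_of_ne hk, Pi.single_eq_of_ne hk2]
        have hmv : G *ᵥ v = fun k => G k i * (-(G i j)) + G k j * (C₀ : ℂ) := by
          funext k
          simp [hv, mulVec_add, mulVec_single]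
          ring
        rw [hsv, hmv, add_dotProduct, single_dotProduct, single_dotProduct]
        simp only [hdiag, hGji, map_neg]
        push_cast
        rw [Complex.normSq_eq_conj_mul_self]
        ring
      rw [hval] at hle
      have hre : (0:ℝ) ≤ C₀ * (C₀^2 - Complex.normSq (G i j)) := by
        have h := (Complex.nonneg_iff.mp hle).1
        rwa [Complex.ofReal_re] at h
      have hnsq : Complex.normSq (G i j) ≤ C₀^2 := by nlinarith
      have habs : (‖G i j‖)^2 ≤ C₀^2 := by rwa [Complex.sq_norm]
      nlinarith [norm_nonneg (G i j)]
  intro j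
  -- the energy equals C₀
  have hE : star (G.mulVec (Pi.single j 1)) ⬝ᵥ A.mulVec (G.mulVec (Pi.single j 1)) = (C₀ : ℂ) := by
    set x : Fin n → ℂ := Pi.single j 1 with hx
    have : star (G *ᵥ x) ⬝ᵥ A *ᵥ (G *ᵥ x) = star x ⬝ᵥ G *ᵥ x := by
      rw [star_mulVec, mulVec_mulVec, dotProduct_mulVec, vecMul_vecMul, hGH, ← mul_assoc, g2]
      exact (dotProduct_mulVec _ _ _).symm
    rw [this]
    have hstar : star x = Pi.single j (1 : ℂ) := by
      funext k
      rcases eq_or_ne k j with rfl | hk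
      · simp [hx]
      · simp [hx, Pi.single_eq_of_ne hk]
    rw [hstar, single_dotProduct, one_mul]
    simp [hx, mulVec_single, hdiag j]
  have hu : ∀ i, G.mulVec (Pi.single j 1) i = G i j := by
    intro i; simp [mulVec_single]
  have hsup : (⨆ i, ‖G.mulVec (Pi.single j 1) i‖) = C₀ := by
    apply le_antisymm
    · apply ciSup_le
      intro i
      rw [hu i]
      exact hbound i j
    · have : ‖G.mulVec (Pi.single j 1) j‖ = C₀ := by
        rw [hu j, hdiag j, Complex.norm_real, Real.norm_of_nonneg hC₀.le]
      rw [← this]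
      exact le_ciSup (f := fun i => ‖G.mulVec (Pi.single j 1) i‖)
        (Set.Finite.bddAbove (Set.finite_range _)) j
  refine ⟨hE, hsup, ?_⟩
  rw [hE, hsup, Complex.ofReal_re, sq]
end
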